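/- arXiv:2110.02867 — 2 statements merged into one kernel-verified Lean document; each statement's English description precedes it below -/
import Mathlib

section
/- At the fixed point O₋ = (θ*, 0) with θ* = arctan √(m₁/m₂), the Jacobian of the system θ' = sin α sin 2θ, α' = -m sin α sin 2θ + 2 cos α (m₁ cos²θ - m₂ sin²θ) has trace -m·sin 2θ* and determinant 2 sin 2θ* (m₁ + m₂) sin 2θ*; in particular both eigenvalues have negative real part, so O₋ is a sink. -/
open Real

/-- At the fixed point `O₋ = (θ*, 0)` with `θ* = arctan √(m₁/m₂)`, the Jacobian matrix `A`
of the system (formed by the partial derivatives of the right hand side) has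
trace `-m sin 2θ*` and determinant `2 sin 2θ* (m₁+m₂) sin 2θ*`; every (complex)
eigenvalue of `A` has negative real part, so `O₋` is a sink. -/
theorem sink_at_O_minus (g m₁ m₂ : ℝ) (hg : 0 < g) (hm₁ : 0 < m₁) (hm₂ : 0 < m₂)
    (m : ℝ) (hm : m = m₁ + m₂ + g / 2)
    (θstar : ℝ) (hθstar : θstar = Real.arctan (Real.sqrt (m₁ / m₂)))
    (f₁ f₂ : ℝ → ℝ → ℝ)
    (hf₁ : ∀ θ α, f₁ θ α = Real.sin α * Real.sin (2 * θ))
    (hf₂ : ∀ θ α, f₂ θ α = -m * Real.sin α * Real.sin (2 * θ) +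
      2 * Real.cos α * (m₁ * Real.cos θ ^ 2 - m₂ * Real.sin θ ^ 2)) :
    ∃ A : Matrix (Fin 2) (Fin 2) ℝ,
      A 0 0 = deriv (fun θ => f₁ θ 0) θstar ∧
      A 0 1 = deriv (fun α => f₁ θstar α) 0 ∧
      A 1 0 = deriv (fun θ => f₂ θ 0) θstar ∧
      A 1 1 = deriv (fun α => f₂ θstar α) 0 ∧
      A.trace = -m * Real.sin (2 * θstar) ∧
      A.det = 2 * Real.sin (2 * θstar) * (m₁ + m₂) * Real.sin (2 * θstar) ∧
      ∀ μ ∈ spectrum ℂ (A.map (Complex.ofReal)), μ.re < 0 := by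
  have hspos : 0 < Real.sin (2 * θstar) := by
    rw [hθstar]
    apply Real.sin_pos_of_pos_of_lt_pi
    · have ht : (0 : ℝ) < Real.sqrt (m₁ / m₂) :=
        Real.sqrt_pos.mpr (div_pos hm₁ hm₂)
      have := Real.arctan_strictMono ht
      rw [Real.arctan_zero] at this
      linarith
    · have := Real.arctan_lt_pi_div_two (Real.sqrt (m₁ / m₂))
      linarith [Real.pi_pos]
  set s : ℝ := Real.sin (2 * θstar) with hs
  have hmpos : 0 < m := by rw [hm]; positivity
  refine ⟨!![0, s; -2 * (m₁ + m₂) * s, -m * s], ?_, ?_, ?_, ?_, ?_, ?_, ?_⟩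
  · simp [hf₁]
  · have h : HasDerivAt (fun α => Real.sin α * s) (Real.cos 0 * s) 0 :=
      (Real.hasDerivAt_sin 0).mul_const s
    simp only [hf₁]
    rw [h.deriv]
    simp
  · have h : HasDerivAt (fun θ : ℝ => 2 * (m₁ * Real.cos θ ^ 2 - m₂ * Real.sin θ ^ 2))
        (2 * (m₁ * (2 * Real.cos θstar ^ 1 * (-Real.sin θstar)) -
          m₂ * (2 * Real.sin θstar ^ 1 * Real.cos θstar))) θstar :=
      ((((Real.hasDerivAt_cos θstar).pow 2).const_mul m₁).sub
        (((Real.hasDerivAt_sin θstar).pow 2).const_mul m₂)).const_mul 2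
    have heq : (fun θ => f₂ θ 0) = fun θ => 2 * (m₁ * Real.cos θ ^ 2 - m₂ * Real.sin θ ^ 2) := by
      funext θ; simp [hf₂]
    have hval : deriv (fun θ => f₂ θ 0) θstar = -2 * (m₁ + m₂) * s := by
      rw [heq, h.deriv, hs, Real.sin_two_mul]; ring
    rw [hval]; simp
  · have h1 : HasDerivAt (fun α => -m * Real.sin α * s) (-m * Real.cos 0 * s) 0 := by
      simpa [mul_assoc] using (((Real.hasDerivAt_sin 0).const_mul (-m)).mul_const s)
    have h2 : HasDerivAt
        (fun α => 2 * Real.cos α * (m₁ * Real.cos θstar ^ 2 - m₂ * Real.sin θstar ^ 2))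
        (2 * (-Real.sin 0) * (m₁ * Real.cos θstar ^ 2 - m₂ * Real.sin θstar ^ 2)) 0 := by
      simpa [mul_assoc] using (((Real.hasDerivAt_cos 0).const_mul 2).mul_const
        (m₁ * Real.cos θstar ^ 2 - m₂ * Real.sin θstar ^ 2))
    have heq : (fun α => f₂ θstar α) = fun α => -m * Real.sin α * s +
        2 * Real.cos α * (m₁ * Real.cos θstar ^ 2 - m₂ * Real.sin θstar ^ 2) := by
      funext α; rw [hf₂]
    have hval : deriv (fun α => f₂ θstar α) 0 = -m * s := by
      have h3 : HasDerivAt (fun α => -m * Real.sin α * s +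
          2 * Real.cos α * (m₁ * Real.cos θstar ^ 2 - m₂ * Real.sin θstar ^ 2)) _ 0 := h1.add h2
      rw [heq, h3.deriv]; simp
    rw [hval]; simp
  · rw [Matrix.trace_fin_two]; simp
  · rw [Matrix.det_fin_two]; simp; ring
  · intro μ hμ
    have hdet : μ * μ - (↑(0 + -m * s) : ℂ) * μ +
        ↑(0 * (-m * s) - s * (-2 * (m₁ + m₂) * s)) = 0 := by
      have h := spectrum.mem_iff.mp hμ
      rw [Matrix.isUnit_iff_isUnit_det, isUnit_iff_ne_zero, not_ne_iff,
        Matrix.det_fin_two] at h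
      simp [Matrix.algebraMap_matrix_apply] at h
      rw [← h]; push_cast; ring
    have hdet' : μ * μ + ((m * s : ℝ) : ℂ) * μ + ((2 * (m₁ + m₂) * s ^ 2 : ℝ) : ℂ) = 0 := by
      push_cast at hdet ⊢
      linear_combination hdet
    set x := μ.re
    set y := μ.im
    have hre : x * x - y * y + (m * s) * x + 2 * (m₁ + m₂) * s ^ 2 = 0 := by
      have := congrArg Complex.re hdet'
      simpa [Complex.mul_re, Complex.mul_im, ← Complex.ofReal_pow] using this
    have him : x * y + y * x + (m * s) * y = 0 := by
      have := congrArg Complex.im hdet'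
      simpa [Complex.mul_re, Complex.mul_im, ← Complex.ofReal_pow] using this
    have hTpos : 0 < m * s := mul_pos hmpos hspos
    have hDpos : 0 < 2 * (m₁ + m₂) * s ^ 2 := by positivity
    have hfac : y * (2 * x + m * s) = 0 := by linarith
    rcases mul_eq_zero.mp hfac with hy | hx
    · nlinarith [sq_nonneg x]
    · nlinarith
end

section
/- Let γ(t) = (θ(t), α(t)) be a solution of θ' = sin α sin 2θ, α' = -m sin α sin 2θ + 2 cos α (m₁ cos²θ - m₂ sin²θ) with 0 < θ(t) < π/2 for all t, and suppose sin α(t₀) = 0 and θ(t₀) < θ* = arctan √(m₁/m₂) at some time t₀ where γ(t₀) is not a fixed point. Then θ'(t₀) = 0 and θ''(t₀) > 0, i.e., θ has a strict local minimum at t₀. -/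
open Real

/-- If a non-fixed solution of the system has `sin α(t₀) = 0` at a point with
`0 < θ(t₀) < θ* = arctan √(m₁/m₂)`, then `θ` has a strict local minimum there:
`θ'(t₀) = 0` and `θ''(t₀) > 0`. -/
theorem theta_local_min (g m₁ m₂ : ℝ) (hg : 0 < g) (hm₁ : 0 < m₁) (hm₂ : 0 < m₂)
    (m : ℝ) (hm : m = m₁ + m₂ + g / 2)
    (θ α : ℝ → ℝ)
    (hθ : ∀ t, HasDerivAt θ (Real.sin (α t) * Real.sin (2 * θ t)) t)
    (hα : ∀ t, HasDerivAt α
      (-m * Real.sin (α t) * Real.sin (2 * θ t) +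
        2 * Real.cos (α t) * (m₁ * Real.cos (θ t) ^ 2 - m₂ * Real.sin (θ t) ^ 2)) t)
    (hrange : ∀ t, θ t ∈ Set.Ioo 0 (π / 2))
    (t₀ : ℝ) (hsin : Real.sin (α t₀) = 0)
    (hlt : θ t₀ < Real.arctan (Real.sqrt (m₁ / m₂)))
    (hnotfixed : (Real.sin (α t₀) * Real.sin (2 * θ t₀),
      -m * Real.sin (α t₀) * Real.sin (2 * θ t₀) +
        2 * Real.cos (α t₀) * (m₁ * Real.cos (θ t₀) ^ 2 - m₂ * Real.sin (θ t₀) ^ 2))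
      ≠ (0, 0)) :
    deriv θ t₀ = 0 ∧ 0 < deriv (deriv θ) t₀ := by
  have hderiv : deriv θ = fun t => Real.sin (α t) * Real.sin (2 * θ t) := by
    funext t; exact (hθ t).deriv
  obtain ⟨hθ0, hθhalf⟩ := hrange t₀
  set A' : ℝ := -m * Real.sin (α t₀) * Real.sin (2 * θ t₀) +
        2 * Real.cos (α t₀) * (m₁ * Real.cos (θ t₀) ^ 2 - m₂ * Real.sin (θ t₀) ^ 2) with hA'
  have h1 : HasDerivAt (fun t => Real.sin (α t)) (Real.cos (α t₀) * A') t₀ :=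
    (Real.hasDerivAt_sin (α t₀)).comp t₀ (hα t₀)
  have h2 : HasDerivAt (fun t => Real.sin (2 * θ t))
      (Real.cos (2 * θ t₀) * (2 * (Real.sin (α t₀) * Real.sin (2 * θ t₀)))) t₀ :=
    by have := (Real.hasDerivAt_sin (2 * θ t₀)).comp t₀ ((hθ t₀).const_mul 2); exact this
  have h3 : HasDerivAt (fun t => Real.sin (α t) * Real.sin (2 * θ t))
      (Real.cos (α t₀) * A' * Real.sin (2 * θ t₀) +
        Real.sin (α t₀) * (Real.cos (2 * θ t₀) * (2 * (Real.sin (α t₀) * Real.sin (2 * θ t₀))))) t₀ :=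
    h1.mul h2
  have hcos2 : Real.cos (α t₀) ^ 2 = 1 := by
    have := Real.sin_sq_add_cos_sq (α t₀)
    rw [hsin] at this; linarith
  have hsin2θ : 0 < Real.sin (2 * θ t₀) :=
    Real.sin_pos_of_pos_of_lt_pi (by linarith) (by linarith [Real.pi_pos])
  have hcosθ : 0 < Real.cos (θ t₀) :=
    Real.cos_pos_of_mem_Ioo ⟨by linarith [Real.pi_pos], hθhalf⟩
  have hsinθ : 0 < Real.sin (θ t₀) :=
    Real.sin_pos_of_pos_of_lt_pi hθ0 (by linarith [Real.pi_pos])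
  have hK : 0 < m₁ * Real.cos (θ t₀) ^ 2 - m₂ * Real.sin (θ t₀) ^ 2 := by
    have hs : 0 ≤ Real.sqrt (m₁ / m₂) := Real.sqrt_nonneg _
    have harc : Real.arctan (Real.sqrt (m₁ / m₂)) ∈ Set.Ioo (-(π/2)) (π/2) :=
      ⟨Real.neg_pi_div_two_lt_arctan _, Real.arctan_lt_pi_div_two _⟩
    have htan : Real.tan (θ t₀) < Real.sqrt (m₁ / m₂) := by
      have := Real.strictMonoOn_tan ⟨by linarith [Real.pi_pos], hθhalf⟩ harc hlt
      rwa [Real.tan_arctan] at this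
    have htanpos : 0 < Real.tan (θ t₀) := Real.tan_pos_of_pos_of_lt_pi_div_two hθ0 hθhalf
    have hsq : Real.tan (θ t₀) ^ 2 < m₁ / m₂ := by
      nlinarith [Real.sq_sqrt (le_of_lt (div_pos hm₁ hm₂))]
    rw [Real.tan_eq_sin_div_cos, div_pow, div_lt_div_iff₀ (by positivity) hm₂] at hsq
    nlinarith
  refine ⟨by rw [hderiv]; simp [hsin], ?_⟩
  rw [hderiv, h3.deriv, hsin]
  have : Real.cos (α t₀) * A' = 2 * (m₁ * Real.cos (θ t₀) ^ 2 - m₂ * Real.sin (θ t₀) ^ 2) := by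
    rw [hA', hsin]; ring_nf; nlinarith [hcos2]
  rw [this]
  nlinarith
end
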